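/- Let p ∈ (0, 1/2], let G be a bipartite graph with parts X and Y with d(X,Y) ≥ p. Then G contains a complete bipartite subgraph K_{t,t} with t = ⌊ log₂(min{|X|,|Y|}) / (2 log₂(1/p)) ⌋. -/

import Mathlib

open Finset

/-- The number of edges of the relation `G` between the finsets `X` and `Y`. -/
def bipE {V : Type*} [DecidableEq V] (G : V → V → Prop) [DecidableRel G]
    (X Y : Finset V) : ℕ :=
  ((X ×ˢ Y).filter fun p => G p.1 p.2).card

/-- The edge density of the relation `G` between the finsets `X` and `Y`. -/
noncomputable def bipD {V : Type*} [DecidableEq V] (G : V → V → Prop) [DecidableRel G]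
    (X Y : Finset V) : ℝ :=
  (bipE G X Y : ℝ) / ((X.card : ℝ) * (Y.card : ℝ))

/-- The number of triangles of `G` with one vertex in each of `A`, `B`, `C`. -/
def triCount {V : Type*} [DecidableEq V] (G : V → V → Prop) [DecidableRel G]
    (A B C : Finset V) : ℕ :=
  ((A ×ˢ B ×ˢ C).filter fun p => G p.1 p.2.1 ∧ G p.1 p.2.2 ∧ G p.2.1 p.2.2).card

/-- The number of triangles of `G` (with `A`-vertex and `B`-vertex) through a fixed
vertex `c`. -/
def triThrough {V : Type*} [DecidableEq V] (G : V → V → Prop) [DecidableRel G]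
    (A B : Finset V) (c : V) : ℕ :=
  ((A ×ˢ B).filter fun p => G p.1 p.2 ∧ G p.1 c ∧ G p.2 c).card

lemma kst_nat_pow (t : ℕ) : t * (t + 1) ≤ 2 * 2 ^ t := by
  induction t with
  | zero => simp
  | succ n ih =>
    have h := @Nat.lt_two_pow_self n
    ring_nf
    ring_nf at ih
    omega

lemma kst_core (τ q s a b T c : ℝ) (ht : 1 ≤ τ)
    (hs : 0 < s) (hqs : 1 ≤ q * s) (hTs : T ≤ s) (hTt : τ * (τ + 1) ≤ 2 * T)
    (ha : s * s ≤ a) (hb : s * s ≤ b) (hc : c = τ * (τ - 1) / 2) :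
    (τ - 1) * b + c * a < q * (a * b) := by
  subst hc
  set c := τ * (τ - 1) / 2 with hc
  have hc0 : 0 ≤ c := by rw [hc]; nlinarith
  have hsT : τ + c ≤ s := by rw [hc]; nlinarith
  have hs2a : 0 < a := by nlinarith
  have hs2b : 0 < b := by nlinarith
  have key : s * ((τ - 1) * b + c * a) < a * b := by
    have h1 : c + 1 ≤ s - (τ - 1) := by linarith
    have h2 : s * (c + 1) ≤ a - s * (τ - 1) := by nlinarith
    have h3 : 0 < a - s * (τ - 1) := by nlinarith
    have h4 : (s*s) * (a - s*(τ-1)) ≤ b * (a - s*(τ-1)) := mul_le_mul_of_nonneg_right hb h3.le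
    have h6 : 0 ≤ (a - s*s) * (s*s - s*c) := mul_nonneg (by linarith) (by nlinarith)
    have h7 : (s*s*s) * (τ + c) ≤ (s*s*s) * s := mul_le_mul_of_nonneg_left hsT (by positivity)
    have h8 : 0 < s*s*s := by positivity
    nlinarith [h4, h6, h7, h8]
  have h2 : a * b ≤ q * s * (a * b) := le_mul_of_one_le_left (by positivity) hqs
  have h9 := key.trans_le h2
  rw [show q * s * (a*b) = s * (q * (a*b)) by ring] at h9
  exact lt_of_mul_lt_mul_left h9 hs.le

lemma kst_count {V : Type*} [DecidableEq V] (G : V → V → Prop) [DecidableRel G]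
    (X Y : Finset V) (t : ℕ) :
    ∑ f ∈ Fintype.piFinset (fun _ : Fin t => Y),
        ((X.filter fun x => ∀ i, G x (f i)).card)
      = ∑ x ∈ X, ((Y.filter fun y => G x y).card) ^ t := by
  calc ∑ f ∈ Fintype.piFinset (fun _ : Fin t => Y), ((X.filter fun x => ∀ i, G x (f i)).card)
      = ∑ f ∈ Fintype.piFinset (fun _ : Fin t => Y), ∑ x ∈ X, (if ∀ i, G x (f i) then 1 else 0) := by
        exact Finset.sum_congr rfl fun f _ => by rw [Finset.card_filter]
    _ = ∑ x ∈ X, ∑ f ∈ Fintype.piFinset (fun _ : Fin t => Y), (if ∀ i, G x (f i) then 1 else 0) :=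
        Finset.sum_comm
    _ = ∑ x ∈ X, ((Y.filter fun y => G x y).card) ^ t := by
        refine Finset.sum_congr rfl fun x _ => ?_
        rw [show (∑ f ∈ Fintype.piFinset (fun _ : Fin t => Y), if ∀ i, G x (f i) then 1 else 0)
          = ((Fintype.piFinset (fun _ : Fin t => Y)).filter (fun f => ∀ i, G x (f i))).card from
          (Finset.card_filter _ _).symm]
        have he : (Fintype.piFinset (fun _ : Fin t => Y)).filter (fun f => ∀ i, G x (f i))
            = Fintype.piFinset (fun _ : Fin t => Y.filter fun y => G x y) := by
          ext f
          simp [Fintype.mem_piFinset, forall_and]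
        rw [he, Fintype.card_piFinset_const]

lemma kst_noninj {V : Type*} [DecidableEq V] (Y : Finset V) (t : ℕ) :
    2 * ((Fintype.piFinset (fun _ : Fin t => Y)).filter
        (fun f => ¬ Function.Injective f)).card ≤ t * (t - 1) * Y.card ^ (t - 1) := by
  classical
  set P := Fintype.piFinset (fun _ : Fin t => Y) with hP
  set pairs : Finset (Fin t × Fin t) := univ.filter (fun ij => ij.1 < ij.2) with hpairs
  have hsub : P.filter (fun f => ¬ Function.Injective f)
      ⊆ pairs.biUnion (fun ij => P.filter fun f => f ij.1 = f ij.2) := by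
    intro f hf
    rw [Finset.mem_filter] at hf
    obtain ⟨hfP, hninj⟩ := hf
    rw [Function.Injective] at hninj
    push_neg at hninj
    obtain ⟨i, j, hij, hne⟩ := hninj
    rcases hne.lt_or_gt with h | h
    · exact Finset.mem_biUnion.mpr ⟨(i, j), by simp [hpairs, h], by simp [hfP, hij]⟩
    · exact Finset.mem_biUnion.mpr ⟨(j, i), by simp [hpairs, h], by simp [hfP, hij.symm]⟩
  have hcard1 : ∀ ij : Fin t × Fin t, ij ∈ pairs →
      (P.filter fun f => f ij.1 = f ij.2).card ≤ Y.card ^ (t - 1) := by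
    rintro ⟨i, j⟩ hij
    have hijlt : i < j := by simpa [hpairs] using hij
    have hmap : ∀ f ∈ P.filter fun f => f i = f j,
        (fun k : {k : Fin t // k ≠ j} => f k.1) ∈ Fintype.piFinset (fun _ : {k : Fin t // k ≠ j} => Y) := by
      intro f hf
      rw [Finset.mem_filter] at hf
      exact Fintype.mem_piFinset.mpr fun k => Fintype.mem_piFinset.mp hf.1 k.1
    have hinj : Set.InjOn (fun (f : Fin t → V) (k : {k : Fin t // k ≠ j}) => f k.1)
        ↑(P.filter fun f => f i = f j) := by
      intro f hf g hg hfg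
      rw [Finset.coe_filter, Set.mem_setOf_eq] at hf hg
      funext k
      by_cases hk : k = j
      · subst hk
        have h1 : f i = g i := congrFun hfg ⟨i, hijlt.ne⟩
        rw [← hf.2, ← hg.2]
        exact h1
      · exact congrFun hfg ⟨k, hk⟩
    have := Finset.card_le_card_of_injOn _ hmap hinj
    refine this.trans (le_of_eq ?_)
    rw [Fintype.card_piFinset]
    rw [Finset.prod_const, Finset.card_univ]
    congr 1
    have : Fintype.card {k : Fin t // ¬ k = j} = t - 1 := by
      rw [Fintype.card_subtype_compl, Fintype.card_subtype_eq, Fintype.card_fin]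
    exact this
  have h1 : (P.filter (fun f => ¬ Function.Injective f)).card
      ≤ pairs.card * Y.card ^ (t - 1) := by
    calc (P.filter (fun f => ¬ Function.Injective f)).card
        ≤ (pairs.biUnion (fun ij => P.filter fun f => f ij.1 = f ij.2)).card :=
          Finset.card_le_card hsub
      _ ≤ ∑ ij ∈ pairs, (P.filter fun f => f ij.1 = f ij.2).card := Finset.card_biUnion_le
      _ ≤ ∑ _ij ∈ pairs, Y.card ^ (t - 1) := Finset.sum_le_sum hcard1
      _ = pairs.card * Y.card ^ (t - 1) := by rw [Finset.sum_const, smul_eq_mul]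
  have hpc : 2 * pairs.card = t * (t - 1) := by
    have hswap : pairs.card = (univ.filter (fun ij : Fin t × Fin t => ij.2 < ij.1)).card := by
      refine Finset.card_bij' (fun a _ => a.swap) (fun a _ => a.swap) ?_ ?_ ?_ ?_ <;>
        simp [hpairs]
    have hdisj : Disjoint pairs (univ.filter (fun ij : Fin t × Fin t => ij.2 < ij.1)) := by
      rw [Finset.disjoint_left]
      intro a ha hb
      rw [hpairs, Finset.mem_filter] at ha
      rw [Finset.mem_filter] at hb
      exact absurd (ha.2.trans hb.2) (lt_irrefl _)
    have hun : pairs ∪ univ.filter (fun ij : Fin t × Fin t => ij.2 < ij.1)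
        = (univ : Finset (Fin t)).offDiag := by
      ext ij
      rw [Finset.mem_union, hpairs, Finset.mem_filter, Finset.mem_filter, Finset.mem_offDiag]
      simp only [Finset.mem_univ, true_and]
      constructor
      · rintro (h | h)
        · exact h.ne
        · exact h.ne'
      · intro h
        exact h.lt_or_gt
    have hoff : ((univ : Finset (Fin t)).offDiag).card = t * t - t := by
      rw [Finset.offDiag_card, Finset.card_univ, Fintype.card_fin]
    have hcu := Finset.card_union_of_disjoint hdisj
    rw [hun, hoff, ← hswap] at hcu
    have htt : t * (t - 1) = t * t - t := by
      cases t with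
      | zero => simp
      | succ n => rw [Nat.succ_sub_one, Nat.mul_succ, Nat.succ_mul, Nat.add_sub_cancel]
    omega
  calc 2 * (P.filter (fun f => ¬ Function.Injective f)).card
      ≤ 2 * (pairs.card * Y.card ^ (t - 1)) := Nat.mul_le_mul_left 2 h1
    _ = (2 * pairs.card) * Y.card ^ (t - 1) := by ring
    _ = t * (t - 1) * Y.card ^ (t - 1) := by rw [hpc]


set_option maxHeartbeats 1000000 in
theorem kovari_sos_turan {V : Type*} [DecidableEq V]
    (G : V → V → Prop) [DecidableRel G] (X Y : Finset V) (p : ℝ)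
    (hp0 : 0 < p) (hp : p ≤ 1 / 2) (hd : p ≤ bipD G X Y) :
    ∃ S T : Finset V, S ⊆ X ∧ T ⊆ Y ∧
      S.card = ⌊Real.logb 2 ((min X.card Y.card : ℕ) : ℝ) / (2 * Real.logb 2 (1 / p))⌋₊ ∧
      T.card = S.card ∧
      ∀ s ∈ S, ∀ t ∈ T, G s t := by
  classical
  have hX : X.card ≠ 0 := by
    intro h
    simp only [bipD, h, Nat.cast_zero, zero_mul, div_zero] at hd
    linarith
  have hY : Y.card ≠ 0 := by
    intro h
    simp only [bipD, h, Nat.cast_zero, mul_zero, div_zero] at hd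
    linarith
  have hXpos : 0 < X.card := Nat.pos_of_ne_zero hX
  have hYpos : 0 < Y.card := Nat.pos_of_ne_zero hY
  set n := min X.card Y.card with hn
  set L := Real.logb 2 (1/p) with hL
  set t := ⌊Real.logb 2 (n:ℝ) / (2*L)⌋₊ with ht
  rcases Nat.eq_zero_or_pos t with ht0 | ht1
  · exact ⟨∅, ∅, Finset.empty_subset _, Finset.empty_subset _,
      by rw [Finset.card_empty]; exact ht0.symm, rfl, by simp⟩
  -- real preliminaries
  have hnpos : 0 < n := lt_min hXpos hYpos
  have hn1R : (1:ℝ) ≤ (n:ℝ) := by exact_mod_cast hnpos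
  have hb2 : (2:ℝ) ≤ 1/p := by rw [le_div_iff₀ hp0]; linarith
  have hL1 : (1:ℝ) ≤ L := by
    rw [hL]
    calc (1:ℝ) = Real.logb 2 2 := (Real.logb_self_eq_one one_lt_two).symm
      _ ≤ Real.logb 2 (1/p) := Real.logb_le_logb_of_le one_lt_two (by norm_num) hb2
  have hL0 : (0:ℝ) < L := lt_of_lt_of_le one_pos hL1
  have hlogn : 0 ≤ Real.logb 2 (n:ℝ) := Real.logb_nonneg one_lt_two hn1R
  have hfl : (t:ℝ) ≤ Real.logb 2 (n:ℝ) / (2*L) := Nat.floor_le (by positivity)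
  have htL : (t:ℝ) * L ≤ Real.logb 2 (n:ℝ) / 2 := by
    have h2L : Real.logb 2 (n:ℝ) / (2*L) * L = Real.logb 2 (n:ℝ) / 2 := by
      field_simp
    calc (t:ℝ)*L ≤ (Real.logb 2 (n:ℝ)/(2*L)) * L := mul_le_mul_of_nonneg_right hfl hL0.le
      _ = _ := h2L
  set s := Real.sqrt (n:ℝ) with hs
  have hs0 : 0 < s := Real.sqrt_pos.mpr (by linarith)
  have hss : s * s = (n:ℝ) := Real.mul_self_sqrt (by linarith)
  have hlogs : Real.logb 2 s = Real.logb 2 (n:ℝ) / 2 := by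
    rw [hs, Real.logb, Real.logb, Real.log_sqrt (by linarith : (0:ℝ) ≤ (n:ℝ))]
    ring
  have h2t : (2:ℝ)^t ≤ s := by
    have h1 : Real.logb 2 ((2:ℝ)^t) ≤ Real.logb 2 s := by
      rw [Real.logb_pow, hlogs, Real.logb_self_eq_one one_lt_two, mul_one]
      calc (t:ℝ) ≤ (t:ℝ) * L := le_mul_of_one_le_right (Nat.cast_nonneg t) hL1
        _ ≤ _ := htL
    exact (Real.logb_le_logb one_lt_two (by positivity) hs0).mp h1
  have hps : (1:ℝ) ≤ p^t * s := by
    have h1 : Real.logb 2 ((1/p)^t) ≤ Real.logb 2 s := by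
      rw [Real.logb_pow, hlogs, ← hL]
      exact htL
    have h2 : (1/p)^t ≤ s := (Real.logb_le_logb one_lt_two (by positivity) hs0).mp h1
    have h3 := mul_le_mul_of_nonneg_left h2 (pow_nonneg hp0.le t)
    rwa [← mul_pow, mul_one_div, div_self hp0.ne', one_pow] at h3
  have hna : (n:ℝ) ≤ (X.card:ℝ) := Nat.cast_le.mpr (min_le_left _ _)
  have hnb : (n:ℝ) ≤ (Y.card:ℝ) := Nat.cast_le.mpr (min_le_right _ _)
  set P := Fintype.piFinset (fun _ : Fin t => Y) with hPdef
  have key : ∃ f ∈ P, Function.Injective f ∧ t ≤ (X.filter fun x => ∀ i, G x (f i)).card := by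
    by_contra hcon
    push_neg at hcon
    have hsplit : (∑ f ∈ P, (X.filter fun x => ∀ i, G x (f i)).card)
        ≤ (t-1) * Y.card ^ t + X.card * (P.filter fun f => ¬ Function.Injective f).card := by
      rw [← Finset.sum_filter_add_sum_filter_not P (fun f => Function.Injective f)]
      have hA : ∑ f ∈ P.filter (fun f => Function.Injective f),
          (X.filter fun x => ∀ i, G x (f i)).card ≤ (t-1) * Y.card ^ t := by
        calc ∑ f ∈ P.filter (fun f => Function.Injective f),
              (X.filter fun x => ∀ i, G x (f i)).card
            ≤ ∑ _f ∈ P.filter (fun f => Function.Injective f), (t-1) :=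
              Finset.sum_le_sum (fun f hf => by
                rw [Finset.mem_filter] at hf
                have hlt := hcon f hf.1 hf.2
                omega)
          _ = (P.filter (fun f => Function.Injective f)).card * (t-1) := by
              rw [Finset.sum_const, smul_eq_mul]
          _ ≤ P.card * (t-1) := Nat.mul_le_mul_right _ (Finset.card_filter_le _ _)
          _ = Y.card ^ t * (t-1) := by rw [hPdef, Fintype.card_piFinset_const]
          _ = (t-1) * Y.card ^ t := mul_comm _ _
      have hB : ∑ f ∈ P.filter (fun f => ¬ Function.Injective f),
          (X.filter fun x => ∀ i, G x (f i)).card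
          ≤ X.card * (P.filter fun f => ¬ Function.Injective f).card := by
        calc ∑ f ∈ P.filter (fun f => ¬Function.Injective f),
              (X.filter fun x => ∀ i, G x (f i)).card
            ≤ ∑ _f ∈ P.filter (fun f => ¬Function.Injective f), X.card :=
              Finset.sum_le_sum (fun f _ => Finset.card_filter_le _ _)
          _ = _ := by rw [Finset.sum_const, smul_eq_mul, mul_comm]
      exact Nat.add_le_add hA hB
    have hid := kst_count G X Y t
    have hdeg : ∑ x ∈ X, (Y.filter fun y => G x y).card = bipE G X Y := by
      have h9 : bipE G X Y = ∑ q ∈ X ×ˢ Y, if G q.1 q.2 then 1 else 0 := by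
        rw [bipE, Finset.card_filter]
      rw [h9, Finset.sum_product]
      exact Finset.sum_congr rfl fun x _ => Finset.card_filter _ _
    have habpos : (0:ℝ) < (X.card:ℝ) * (Y.card:ℝ) :=
      mul_pos (by exact_mod_cast hXpos) (by exact_mod_cast hYpos)
    have he : p * ((X.card:ℝ) * Y.card) ≤ (bipE G X Y : ℝ) := by
      rw [bipD] at hd
      exact (le_div_iff₀ habpos).mp hd
    obtain ⟨u, htu⟩ : ∃ u, t = u + 1 := ⟨t-1, (Nat.succ_pred_eq_of_pos ht1).symm⟩
    have hJ := pow_sum_div_card_le_sum_pow (s := X)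
      (f := fun x => ((Y.filter fun y => G x y).card : ℝ)) (fun i _ => by positivity) u
    rw [← htu] at hJ
    have hED : p * ((X.card:ℝ) * Y.card) ≤ ∑ x ∈ X, ((Y.filter fun y => G x y).card : ℝ) := by
      rw [show (∑ x ∈ X, ((Y.filter fun y => G x y).card : ℝ))
          = ((∑ x ∈ X, (Y.filter fun y => G x y).card : ℕ) : ℝ) by push_cast; rfl, hdeg]
      exact he
    have hXu : (0:ℝ) < (X.card:ℝ)^u := pow_pos (by exact_mod_cast hXpos) u
    have hmain : p^t * (X.card:ℝ) * (Y.card:ℝ)^t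
        ≤ ∑ x ∈ X, (((Y.filter fun y => G x y).card : ℝ))^t := by
      have h1 : (p * ((X.card:ℝ) * Y.card))^t
          ≤ (∑ x ∈ X, ((Y.filter fun y => G x y).card : ℝ))^t :=
        pow_le_pow_left₀ (by positivity) hED t
      have h2 : (p * ((X.card:ℝ) * Y.card))^t / (X.card:ℝ)^u
          ≤ (∑ x ∈ X, ((Y.filter fun y => G x y).card : ℝ))^t / (X.card:ℝ)^u := by
        gcongr
      have h3 : (p * ((X.card:ℝ) * Y.card))^t / (X.card:ℝ)^u
          = p^t * (X.card:ℝ) * (Y.card:ℝ)^t := by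
        rw [mul_pow, mul_pow, htu, pow_succ]
        field_simp
        ring
      rw [← h3]
      exact h2.trans hJ
    have hnoninj := kst_noninj Y t
    have hidR : ((∑ f ∈ P, (X.filter fun x => ∀ i, G x (f i)).card : ℕ) : ℝ)
        = ∑ x ∈ X, (((Y.filter fun y => G x y).card : ℝ))^t := by
      rw [hid]
      push_cast
      rfl
    have hu1 : t - 1 = u := by rw [htu, Nat.add_sub_cancel]
    rw [hu1] at hsplit hnoninj
    have huR : (u:ℝ) = (t:ℝ) - 1 := by
      rw [htu]
      push_cast
      ring
    have hcore := kst_core (t:ℝ) (p^t) s (X.card:ℝ) (Y.card:ℝ) ((2:ℝ)^t)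
      ((t:ℝ)*((t:ℝ)-1)/2) (by exact_mod_cast ht1) hs0 hps h2t
      (by exact_mod_cast kst_nat_pow t) (hss ▸ hna) (hss ▸ hnb) rfl
    have hBu : (0:ℝ) < (Y.card:ℝ)^u := pow_pos (by exact_mod_cast hYpos) u
    have hcoreB := mul_lt_mul_of_pos_right hcore hBu
    have hsplitR : ((∑ f ∈ P, (X.filter fun x => ∀ i, G x (f i)).card : ℕ) : ℝ)
        ≤ (u:ℝ) * (Y.card:ℝ)^t
          + (X.card:ℝ) * ((P.filter fun f => ¬ Function.Injective f).card : ℝ) := by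
      exact_mod_cast hsplit
    have hnoninjR : 2 * ((P.filter fun f => ¬ Function.Injective f).card : ℝ)
        ≤ (t:ℝ) * (u:ℝ) * (Y.card:ℝ)^u := by
      exact_mod_cast hnoninj
    have hBc : ((P.filter fun f => ¬ Function.Injective f).card : ℝ)
        ≤ (t:ℝ)*((t:ℝ)-1)/2 * (Y.card:ℝ)^u := by
      rw [← huR]
      linarith
    have h5 : (X.card:ℝ) * ((P.filter fun f => ¬ Function.Injective f).card : ℝ)
        ≤ (X.card:ℝ) * ((t:ℝ)*((t:ℝ)-1)/2 * (Y.card:ℝ)^u) :=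
      mul_le_mul_of_nonneg_left hBc (Nat.cast_nonneg _)
    have hBt : (Y.card:ℝ)^t = (Y.card:ℝ)^u * (Y.card:ℝ) := by rw [htu, pow_succ]
    rw [hBt] at hmain hsplitR
    rw [hidR] at hsplitR
    rw [huR] at hsplitR
    nlinarith [hmain, hsplitR, h5, hcoreB]
  obtain ⟨f, hfP, hfinj, hfc⟩ := key
  obtain ⟨S, hSsub, hScard⟩ := Finset.exists_subset_card_eq hfc
  refine ⟨S, Finset.image f Finset.univ, hSsub.trans (Finset.filter_subset _ _), ?_, hScard, ?_, ?_⟩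
  · intro y hy
    obtain ⟨i, _, rfl⟩ := Finset.mem_image.mp hy
    exact Fintype.mem_piFinset.mp hfP i
  · rw [Finset.card_image_of_injective _ hfinj, Finset.card_univ, Fintype.card_fin, hScard]
  · intro a ha y hy
    obtain ⟨i, _, rfl⟩ := Finset.mem_image.mp hy
    have := hSsub ha
    rw [Finset.mem_filter] at this
    exact this.2 i
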